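/- Fix M > 0 and ρ ∈ (0,1/2). With λ_r as above, define α_r = −λ_r, β_r = ρ·ln(rλ_r)/r − λ_r, γ_r = (M−β_r)/(α_r−β_r), and K_{2,r} = −2e^(2+rλ_r)(rλ_r)^(1−2ρ)/(ρ·ln(rλ_r)). Then (α_r − β_r)/(K_{2,r})^(2γ_r+1) → +∞ as r → 0⁺. -/

import Mathlib

open Real Filter

lemma aux_div_atTop {g h : ℝ → ℝ} {l : Filter ℝ} (hg : Tendsto g l atTop)
    (hh : Tendsto h l (nhds 0)) (hhpos : ∀ᶠ r in l, 0 < h r) :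
    Tendsto (fun r => g r / h r) l atTop := by
  have hinv : Tendsto (fun r => (h r)⁻¹) l atTop :=
    tendsto_inv_nhdsGT_zero.comp (tendsto_nhdsWithin_iff.mpr ⟨hh, hhpos⟩)
  exact (hg.atTop_mul_atTop₀ hinv).congr fun r => (div_eq_mul_inv _ _).symm

theorem stmt_16 (M ρ : ℝ) (hM : 0 < M) (hρ0 : 0 < ρ) (hρ1 : ρ < 1 / 2)
    (lam : ℝ → ℝ)
    (hlam : ∀ r ∈ Set.Ioo 0 (1 / (M * Real.exp 1)),
      0 < lam r ∧ lam r < 1 / r ∧ M * Real.exp (r * lam r) = lam r) :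
    Tendsto (fun r =>
        ((-lam r) - (ρ * Real.log (r * lam r) / r - lam r))
          / (-(2 * Real.exp (2 + r * lam r) * (r * lam r) ^ (1 - 2 * ρ))
              / (ρ * Real.log (r * lam r)))
            ^ (2 * ((M - (ρ * Real.log (r * lam r) / r - lam r))
                / ((-lam r) - (ρ * Real.log (r * lam r) / r - lam r))) + 1))
        (nhdsWithin 0 (Set.Ioo 0 (1 / (M * Real.exp 1)))) atTop := by
  set l := nhdsWithin (0:ℝ) (Set.Ioo 0 (1 / (M * Real.exp 1))) with hldef
  set u : ℝ → ℝ := fun r => r * lam r with hudef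
  have hMe : (0:ℝ) < M * Real.exp 1 := by positivity
  -- basic eventual facts
  have hbase : ∀ᶠ r in l, 0 < r ∧ 0 < lam r ∧ u r < 1 ∧
      M * Real.exp (u r) = lam r ∧ u r ≤ r * (M * Real.exp 1) := by
    filter_upwards [self_mem_nhdsWithin] with r hr
    obtain ⟨h1, h2, h3⟩ := hlam r hr
    have hr0 : 0 < r := hr.1
    have hu1 : u r < 1 := by
      have := (lt_div_iff₀ hr0).mp h2
      simpa [hudef, mul_comm] using this
    refine ⟨hr0, h1, hu1, h3, ?_⟩
    have hle : lam r ≤ M * Real.exp 1 := by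
      rw [← h3]
      have : Real.exp (u r) ≤ Real.exp 1 := Real.exp_le_exp.mpr hu1.le
      nlinarith
    calc u r = r * lam r := rfl
      _ ≤ r * (M * Real.exp 1) := by nlinarith
  have hr0ev : ∀ᶠ r in l, 0 < r := hbase.mono fun r h => h.1
  have hupos : ∀ᶠ r in l, 0 < u r := hbase.mono fun r h => mul_pos h.1 h.2.1
  have hulog : ∀ᶠ r in l, Real.log (u r) < 0 := by
    filter_upwards [hbase] with r h
    exact Real.log_neg (mul_pos h.1 h.2.1) h.2.2.1
  -- r tends to 0
  have hrid : Tendsto (fun r : ℝ => r) l (nhds 0) := tendsto_id.mono_left nhdsWithin_le_nhds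
  -- u tends to 0
  have hu0 : Tendsto u l (nhds 0) := by
    have h1 : Tendsto (fun r : ℝ => r * (M * Real.exp 1)) l (nhds 0) := by
      simpa using hrid.mul_const (M * Real.exp 1)
    apply squeeze_zero' (hupos.mono fun r h => h.le)
      (hbase.mono fun r h => h.2.2.2.2) h1
  have hu0' : Tendsto u l (nhdsWithin 0 (Set.Ioi 0)) :=
    tendsto_nhdsWithin_iff.mpr ⟨hu0, hupos⟩
  -- log u → -∞
  have hlogbot : Tendsto (fun r => Real.log (u r)) l atBot :=
    Real.tendsto_log_nhdsGT_zero.comp hu0'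
  have hneglog : Tendsto (fun r => -Real.log (u r)) l atTop :=
    tendsto_neg_atBot_atTop.comp hlogbot
  -- 1/r → ∞
  have hrinv : Tendsto (fun r : ℝ => r⁻¹) l atTop := by
    refine tendsto_inv_nhdsGT_zero.comp (tendsto_nhdsWithin_iff.mpr ⟨hrid, hr0ev⟩)
  -- the numerator g → ∞
  have hg : Tendsto (fun r =>
      ((-lam r) - (ρ * Real.log (r * lam r) / r - lam r))) l atTop := by
    have h1 : Tendsto (fun r => ρ * (-Real.log (u r) * r⁻¹)) l atTop :=
      (hneglog.atTop_mul_atTop₀ hrinv).const_mul_atTop hρ0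
    exact h1.congr fun r => by simp only [hudef]; ring
  have hgpos : ∀ᶠ r in l, 0 < ((-lam r) - (ρ * Real.log (r * lam r) / r - lam r)) :=
    hg.eventually_gt_atTop 0
  -- lam → M
  have hlamM : Tendsto lam l (nhds M) := by
    have h1 : Tendsto (fun r => M * Real.exp (u r)) l (nhds M) := by
      have := ((Real.continuous_exp.tendsto 0).comp hu0).const_mul M
      simpa using this
    exact h1.congr' (hbase.mono fun r h => h.2.2.2.1)
  -- K → 0
  have hK : Tendsto (fun r =>
      (-(2 * Real.exp (2 + r * lam r) * (r * lam r) ^ (1 - 2 * ρ))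
        / (ρ * Real.log (r * lam r)))) l (nhds 0) := by
    have hnum : Tendsto (fun r => 2 * Real.exp (2 + u r) * (u r) ^ (1 - 2 * ρ)) l (nhds 0) := by
      have he : Tendsto (fun r => Real.exp (2 + u r)) l (nhds (Real.exp (2 + 0))) :=
        (Real.continuous_exp.tendsto _).comp (tendsto_const_nhds.add hu0)
      have hp : Tendsto (fun r => (u r) ^ (1 - 2 * ρ)) l (nhds ((0:ℝ) ^ (1 - 2 * ρ))) :=
        hu0.rpow_const (Or.inr (by linarith))
      have h0 : ((0:ℝ) ^ (1 - 2 * ρ)) = 0 := Real.zero_rpow (by linarith)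
      have := ((he.const_mul 2).mul hp)
      rw [h0, mul_zero] at this
      exact this
    have hden : Tendsto (fun r => ρ * (-Real.log (u r))) l atTop :=
      hneglog.const_mul_atTop hρ0
    have h1 : Tendsto (fun r =>
        (2 * Real.exp (2 + u r) * (u r) ^ (1 - 2 * ρ)) / (ρ * (-Real.log (u r))))
        l (nhds 0) := hnum.div_atTop hden
    exact h1.congr fun r => by rw [mul_neg, div_neg, neg_div]
  have hKpos : ∀ᶠ r in l, 0 <
      (-(2 * Real.exp (2 + r * lam r) * (r * lam r) ^ (1 - 2 * ρ))
        / (ρ * Real.log (r * lam r))) := by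
    filter_upwards [hupos, hulog] with r h1 h2
    apply div_pos_of_neg_of_neg
    · have : (0:ℝ) < 2 * Real.exp (2 + r * lam r) * (r * lam r) ^ (1 - 2 * ρ) := by
        have : (0:ℝ) < (u r) ^ (1 - 2 * ρ) := Real.rpow_pos_of_pos h1 _
        positivity
      linarith
    · exact mul_neg_of_pos_of_neg hρ0 h2
  -- exponent → 3
  have hE : Tendsto (fun r =>
      (2 * ((M - (ρ * Real.log (r * lam r) / r - lam r))
        / ((-lam r) - (ρ * Real.log (r * lam r) / r - lam r))) + 1)) l (nhds 3) := by
    have hγ : Tendsto (fun r =>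
        ((M - (ρ * Real.log (r * lam r) / r - lam r))
          / ((-lam r) - (ρ * Real.log (r * lam r) / r - lam r)))) l (nhds 1) := by
      have h1 : Tendsto (fun r => (M + lam r) /
          ((-lam r) - (ρ * Real.log (r * lam r) / r - lam r)) + 1) l (nhds (0 + 1)) :=
        ((tendsto_const_nhds.add hlamM).div_atTop hg).add tendsto_const_nhds
      rw [zero_add] at h1
      refine h1.congr' ?_
      filter_upwards [hgpos] with r hgr
      have hne : ((-lam r) - (ρ * Real.log (r * lam r) / r - lam r)) ≠ 0 := ne_of_gt hgr
      rw [div_add_one hne]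
      congr 1
      ring
    have h2 := (hγ.const_mul 2).add (tendsto_const_nhds (x := (1:ℝ)))
    norm_num at h2
    exact h2
  -- h = K ^ E → 0, positive
  have hh : Tendsto (fun r =>
      (-(2 * Real.exp (2 + r * lam r) * (r * lam r) ^ (1 - 2 * ρ))
        / (ρ * Real.log (r * lam r)))
      ^ (2 * ((M - (ρ * Real.log (r * lam r) / r - lam r))
        / ((-lam r) - (ρ * Real.log (r * lam r) / r - lam r))) + 1)) l (nhds 0) := by
    have := hK.rpow hE (Or.inr (by norm_num))
    rwa [Real.zero_rpow (by norm_num)] at this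
  have hhpos : ∀ᶠ r in l,
      0 < (-(2 * Real.exp (2 + r * lam r) * (r * lam r) ^ (1 - 2 * ρ))
        / (ρ * Real.log (r * lam r)))
      ^ (2 * ((M - (ρ * Real.log (r * lam r) / r - lam r))
        / ((-lam r) - (ρ * Real.log (r * lam r) / r - lam r))) + 1) :=
    hKpos.mono fun r h => Real.rpow_pos_of_pos h _
  exact aux_div_atTop hg hh hhpos
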